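/- arXiv:1302.0176 — 4 statements merged into one kernel-verified Lean document; each statement's English description precedes it below -/
import Mathlib

section
/- For every ξ = (ξ₁, ξ₂) ∈ ℝ² and every k ∈ ℤ, the matrix A(ξ,k) is Hermitian, and its characteristic polynomial equals X⁴ − (1 + |ξ|² + k²)·X² + k². -/
/-- The 4×4 Fourier symbol of the acoustic–Rossby wave operator. -/
noncomputable def acousticSymbol (ξ₁ ξ₂ : ℝ) (k : ℤ) : Matrix (Fin 4) (Fin 4) ℂ :=
  !![0, (ξ₁ : ℂ), (ξ₂ : ℂ), (k : ℂ);
     (ξ₁ : ℂ), 0, Complex.I, 0;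
     (ξ₂ : ℂ), -Complex.I, 0, 0;
     (k : ℂ), 0, 0, 0]

open Polynomial in
/-- For every `ξ = (ξ₁, ξ₂) ∈ ℝ²` and every `k ∈ ℤ`, the matrix `A(ξ,k)` is Hermitian and
its characteristic polynomial equals `X⁴ − (1 + |ξ|² + k²)·X² + k²`. -/
theorem acousticSymbol_isHermitian_and_charpoly (ξ₁ ξ₂ : ℝ) (k : ℤ) :
    (acousticSymbol ξ₁ ξ₂ k).IsHermitian ∧
    (acousticSymbol ξ₁ ξ₂ k).charpoly =
      X ^ 4 - C (((1 + (ξ₁ ^ 2 + ξ₂ ^ 2) + (k : ℝ) ^ 2 : ℝ)) : ℂ) * X ^ 2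
        + C (((k : ℝ) ^ 2 : ℝ) : ℂ) := by
  constructor
  · show (acousticSymbol ξ₁ ξ₂ k).conjTranspose = _
    ext i j
    fin_cases i <;> fin_cases j <;>
      simp [acousticSymbol, Matrix.conjTranspose_apply, Matrix.vecHead, Matrix.vecTail]
  · have hcm : (acousticSymbol ξ₁ ξ₂ k).charmatrix =
        !![X, -C (ξ₁ : ℂ), -C (ξ₂ : ℂ), -C ((k : ℤ) : ℂ);
           -C (ξ₁ : ℂ), X, -C Complex.I, 0;
           -C (ξ₂ : ℂ), C Complex.I, X, 0;
           -C ((k : ℤ) : ℂ), 0, 0, X] := by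
      ext i j
      fin_cases i <;> fin_cases j <;>
        simp [acousticSymbol, Matrix.charmatrix_apply, Matrix.one_apply,
          Matrix.vecHead, Matrix.vecTail]
    rw [Matrix.charpoly, hcm, Matrix.det_succ_row_zero]
    simp [Fin.sum_univ_succ, Matrix.det_fin_three, Matrix.vecHead, Matrix.vecTail,
      Fin.succAbove, Matrix.submatrix, Fin.succ, Fin.castSucc, Fin.castAdd,
      Fin.castLE]
    ring_nf
    rw [show (Polynomial.C Complex.I) ^ 2 = -1 by
      rw [← Polynomial.C_pow, Complex.I_sq, map_neg, map_one]]
    ring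
end

section
/- For every fixed k ∈ ℤ with k ≠ 0, the function s ↦ λ₃(s,k) is strictly decreasing on the interval [0, ∞). -/
/-- `a(s,k) = 1 + s² + k²`. -/
noncomputable def aFun (s : ℝ) (k : ℤ) : ℝ := 1 + s ^ 2 + (k : ℝ) ^ 2

/-- `λ₁(s,k) = √((a(s,k) + √(a(s,k)² − 4k²))/2)`. -/
noncomputable def lam1 (s : ℝ) (k : ℤ) : ℝ :=
  Real.sqrt ((aFun s k + Real.sqrt (aFun s k ^ 2 - 4 * (k : ℝ) ^ 2)) / 2)

/-- `λ₃(s,k) = √((a(s,k) − √(a(s,k)² − 4k²))/2)`. -/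
noncomputable def lam3 (s : ℝ) (k : ℤ) : ℝ :=
  Real.sqrt ((aFun s k - Real.sqrt (aFun s k ^ 2 - 4 * (k : ℝ) ^ 2)) / 2)

/-- For every fixed `k ∈ ℤ` with `k ≠ 0`, the function `s ↦ λ₃(s,k)` is strictly decreasing
on `[0, ∞)`. -/
theorem lam3_strictAntiOn (k : ℤ) (hk : k ≠ 0) :
    StrictAntiOn (fun s => lam3 s k) (Set.Ici (0 : ℝ)) := by
  intro s hs t ht hst
  simp only [Set.mem_Ici] at hs ht
  have hk2 : (0:ℝ) < (k:ℝ) ^ 2 := by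
    have : (k:ℝ) ≠ 0 := Int.cast_ne_zero.mpr hk
    positivity
  -- abbreviations
  set A := aFun s k with hA
  set B := aFun t k with hB
  have hApos : 0 < A := by rw [hA]; unfold aFun; positivity
  have hBpos : 0 < B := by rw [hB]; unfold aFun; positivity
  have hAB : A < B := by
    rw [hA, hB]; unfold aFun
    have : s ^ 2 < t ^ 2 := by nlinarith
    linarith
  have hDA : 0 ≤ A ^ 2 - 4 * (k:ℝ) ^ 2 := by
    have h1 : 0 ≤ s ^ 2 + ((k:ℝ) - 1) ^ 2 := by positivity
    have h2 : 0 ≤ s ^ 2 + ((k:ℝ) + 1) ^ 2 := by positivity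
    have := mul_nonneg h1 h2
    rw [hA]; unfold aFun; nlinarith
  have hDB : 0 ≤ B ^ 2 - 4 * (k:ℝ) ^ 2 := by
    have h1 : 0 ≤ t ^ 2 + ((k:ℝ) - 1) ^ 2 := by positivity
    have h2 : 0 ≤ t ^ 2 + ((k:ℝ) + 1) ^ 2 := by positivity
    have := mul_nonneg h1 h2
    rw [hB]; unfold aFun; nlinarith
  set u := Real.sqrt (A ^ 2 - 4 * (k:ℝ) ^ 2) with hu
  set v := Real.sqrt (B ^ 2 - 4 * (k:ℝ) ^ 2) with hv
  have hu0 : 0 ≤ u := Real.sqrt_nonneg _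
  have hv0 : 0 ≤ v := Real.sqrt_nonneg _
  have huA : u < A := (Real.sqrt_lt' hApos).mpr (by linarith)
  have hvB : v < B := (Real.sqrt_lt' hBpos).mpr (by linarith)
  have huv : u ≤ v := Real.sqrt_le_sqrt (by nlinarith)
  have hu2 : u ^ 2 = A ^ 2 - 4 * (k:ℝ) ^ 2 := Real.sq_sqrt hDA
  have hv2 : v ^ 2 = B ^ 2 - 4 * (k:ℝ) ^ 2 := Real.sq_sqrt hDB
  -- key: (A - u)(A + u) = 4k² = (B - v)(B + v), with A + u < B + v
  have hkey : B - v < A - u := by nlinarith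
  show lam3 t k < lam3 s k
  unfold lam3
  rw [← hA, ← hB, ← hu, ← hv]
  apply Real.sqrt_lt_sqrt
  · linarith
  · linarith
end

section
/- Let ε > 0, let s : ℝ × ℝ³ → ℝ and V : ℝ × ℝ³ → ℝ³ be continuously differentiable, and suppose there is a compact set K ⊂ ℝ³ such that for every time t the supports of s(t,·) and V(t,·) are contained in K. If ε ∂ₜs + div_x V = 0 and ε ∂ₜV + ω × V + ∇_x s = 0 hold everywhere, where ω = (0,0,1), then the energy E(t) = ∫_{ℝ³} ( s(t,x)² + |V(t,x)|² ) dx is constant in t. -/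
open MeasureTheory Set Function

/-- The `i`-th spatial partial derivative of a scalar function on `ℝ³`. -/
noncomputable def pd3 (i : Fin 3) (f : (Fin 3 → ℝ) → ℝ) (x : Fin 3 → ℝ) : ℝ :=
  fderiv ℝ f x (Pi.single i 1)

lemma div_integral_zero (f : Fin 3 → (Fin 3 → ℝ) → ℝ)
    (hf : ∀ i, ContDiff ℝ 1 (f i)) (K : Set (Fin 3 → ℝ)) (hK : IsCompact K)
    (hsupp : ∀ i, Function.support (f i) ⊆ K) :
    ∫ x, ∑ i, pd3 i (f i) x = 0 := by
  obtain ⟨r, hr⟩ := hK.isBounded.subset_closedBall (0 : Fin 3 → ℝ)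
  set r' : ℝ := max r 0 with hr'
  set a : Fin 3 → ℝ := fun _ => -(r' + 1) with ha
  set b : Fin 3 → ℝ := fun _ => (r' + 1) with hb
  have hr'0 : (0:ℝ) ≤ r' := le_max_right _ _
  have hKb : ∀ x ∈ K, ∀ i, |x i| ≤ r' := by
    intro x hx i
    have := hr hx
    simp only [Metric.mem_closedBall, dist_zero_right] at this
    calc |x i| = ‖x i‖ := rfl
      _ ≤ ‖x‖ := norm_le_pi_norm x i
      _ ≤ r := this
      _ ≤ r' := le_max_left _ _
  have hKIcc : K ⊆ Icc a b := by
    intro x hx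
    have h1 := fun i => (abs_le.mp (hKb x hx i)).1
    have h2 := fun i => (abs_le.mp (hKb x hx i)).2
    exact ⟨fun i => by simpa [ha] using by linarith [h1 i],
           fun i => by simpa [hb] using by linarith [h2 i]⟩
  have hzero : ∀ x ∉ K, ∀ i, f i x = 0 := fun x hx i => by
    by_contra h; exact hx (hsupp i h)
  -- pd3 vanishes off K
  have hpd0 : ∀ x ∉ K, ∀ i : Fin 3, fderiv ℝ (f i) x (Pi.single i 1) = 0 := by
    intro x hx i
    have hev : f i =ᶠ[nhds x] (fun _ => 0) := by
      filter_upwards [hK.isClosed.isOpen_compl.mem_nhds hx] with y hy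
      exact hzero y hy i
    rw [hev.fderiv_eq, fderiv_fun_const]
    simp
  have hle : a ≤ b := fun i => by simp [ha, hb]; linarith
  have hcont : ∀ i, Continuous fun x => pd3 i (f i) x := by
    intro i
    exact ((hf i).continuous_fderiv one_ne_zero).clm_apply continuous_const
  have hInt : Integrable (fun x => ∑ i, pd3 i (f i) x) := by
    apply Continuous.integrable_of_hasCompactSupport (by continuity)
    exact HasCompactSupport.intro hK (fun x hx => by
      simp [pd3, hpd0 x hx])
  have key := MeasureTheory.integral_divergence_of_hasFDerivAt_off_countable'
    a b hle f (fun i x => fderiv ℝ (f i) x) ∅ countable_empty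
    (fun i => (hf i).continuous.continuousOn)
    (fun x _ i => ((hf i).differentiable one_ne_zero).differentiableAt.hasFDerivAt)
    (hInt.integrableOn)
  rw [setIntegral_eq_integral_of_forall_compl_eq_zero
    (fun x hx => by simp [hpd0 x (fun hxK => hx (hKIcc hxK))])] at key
  rw [show (∫ x, ∑ i, pd3 i (f i) x) = ∫ x, ∑ i, fderiv ℝ (f i) x (Pi.single i 1) from rfl]
  rw [key]
  apply Finset.sum_eq_zero
  intro i _
  have hfront : ∀ y, f i (Fin.insertNth i (b i) y) = 0 := by
    intro y
    apply hzero _ (fun hmem => ?_) i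
    have := hKb _ hmem i
    simp only [Fin.insertNth_apply_same] at this
    replace this : |r' + 1| ≤ r' := this
    rw [abs_of_nonneg (by linarith)] at this
    linarith
  have hback : ∀ y, f i (Fin.insertNth i (a i) y) = 0 := by
    intro y
    apply hzero _ (fun hmem => ?_) i
    have := hKb _ hmem i
    simp only [Fin.insertNth_apply_same] at this
    replace this : |(-(r' + 1))| ≤ r' := this
    rw [abs_neg, abs_of_nonneg (by linarith)] at this
    linarith
  simp [hfront, hback]

/-- Energy conservation for the acoustic–Rossby wave system
`ε ∂ₜs + div V = 0`, `ε ∂ₜV + ω × V + ∇s = 0` with `ω = (0,0,1)`: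
for compactly supported `C¹` solutions, the energy
`E(t) = ∫ (s(t,x)² + |V(t,x)|²) dx` is constant in `t`. -/
theorem acoustic_rossby_energy_conservation
    (ε : ℝ) (hε : 0 < ε)
    (s : ℝ × (Fin 3 → ℝ) → ℝ) (V : ℝ × (Fin 3 → ℝ) → Fin 3 → ℝ)
    (hs : ContDiff ℝ 1 s) (hV : ContDiff ℝ 1 V)
    (hsupp : ∃ K : Set (Fin 3 → ℝ), IsCompact K ∧ ∀ t : ℝ,
      Function.support (fun x => s (t, x)) ⊆ K ∧
      Function.support (fun x => V (t, x)) ⊆ K)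
    (hmass : ∀ t : ℝ, ∀ x : Fin 3 → ℝ,
      ε * deriv (fun τ => s (τ, x)) t + ∑ i, pd3 i (fun y => V (t, y) i) x = 0)
    (hmom : ∀ t : ℝ, ∀ x : Fin 3 → ℝ, ∀ i : Fin 3,
      ε * deriv (fun τ => V (τ, x) i) t
        + ![-(V (t, x) 1), V (t, x) 0, 0] i
        + pd3 i (fun y => s (t, y)) x = 0) :
    ∀ t₁ t₂ : ℝ,
      (∫ x, (s (t₁, x) ^ 2 + ∑ i, (V (t₁, x) i) ^ 2)) =
      (∫ x, (s (t₂, x) ^ 2 + ∑ i, (V (t₂, x) i) ^ 2)) := by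
  obtain ⟨K, hK, hKsup⟩ := hsupp
  -- component functions
  have hVi : ∀ i : Fin 3, ContDiff ℝ 1 (fun p : ℝ × (Fin 3 → ℝ) => V p i) := fun i =>
    (ContinuousLinearMap.proj (R := ℝ) (φ := fun _ : Fin 3 => ℝ) i).contDiff.comp hV
  -- the energy density
  set F : ℝ × (Fin 3 → ℝ) → ℝ := fun p => s p ^ 2 + ∑ i, (V p i) ^ 2 with hFdef
  have hFc : ContDiff ℝ 1 F := (hs.pow 2).add (ContDiff.sum fun i _ => (hVi i).pow 2)
  -- vanishing of s, V off K
  have hs0 : ∀ t, ∀ x ∉ K, s (t, x) = 0 := fun t x hx => by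
    by_contra h; exact hx ((hKsup t).1 h)
  have hV0 : ∀ t, ∀ x ∉ K, ∀ i, V (t, x) i = 0 := fun t x hx i => by
    by_contra h
    exact hx ((hKsup t).2 (Function.mem_support.mpr fun h0 => h (congrFun h0 i)))
  -- time derivatives
  set ds : ℝ → (Fin 3 → ℝ) → ℝ := fun t x => fderiv ℝ s (t, x) (1, 0) with hdsdef
  set dV : Fin 3 → ℝ → (Fin 3 → ℝ) → ℝ :=
    fun i t x => fderiv ℝ (fun p => V p i) (t, x) (1, 0) with hdVdef
  have hcurve : ∀ (t : ℝ) (x : Fin 3 → ℝ),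
      HasDerivAt (fun τ : ℝ => (τ, x)) ((1 : ℝ), (0 : Fin 3 → ℝ)) t := fun t x =>
    (hasDerivAt_id t).prodMk (hasDerivAt_const t x)
  have hds : ∀ t x, HasDerivAt (fun τ => s (τ, x)) (ds t x) t := fun t x =>
    ((hs.differentiable one_ne_zero) (t, x)).hasFDerivAt.comp_hasDerivAt t (hcurve t x)
  have hdV : ∀ (i : Fin 3) (t x), HasDerivAt (fun τ => V (τ, x) i) (dV i t x) t :=
    fun i t x =>
    by have h := (((hVi i).differentiable one_ne_zero) (t, x)).hasFDerivAt.comp_hasDerivAt t (hcurve t x); exact h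
  -- rewritten PDEs
  have hm1 : ∀ t x, ε * ds t x + ∑ i, pd3 i (fun y => V (t, y) i) x = 0 := fun t x => by
    have := hmass t x; rwa [(hds t x).deriv] at this
  have hm2 : ∀ t x i, ε * dV i t x + ![-(V (t, x) 1), V (t, x) 0, 0] i
      + pd3 i (fun y => s (t, y)) x = 0 := fun t x i => by
    have := hmom t x i; rwa [(hdV i t x).deriv] at this
  -- time derivative of the density
  set F' : ℝ → (Fin 3 → ℝ) → ℝ :=
    fun t x => 2 * s (t, x) * ds t x + ∑ i, 2 * V (t, x) i * dV i t x with hF'def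
  have hFderiv : ∀ t x, HasDerivAt (fun τ => F (τ, x)) (F' t x) t := by
    intro t x
    have h1 := (hds t x).pow 2
    have h2 : HasDerivAt (fun τ => ∑ i, (V (τ, x) i) ^ 2)
        (∑ i, (2 : ℕ) * (V (t, x) i) ^ (2 - 1) * dV i t x) t :=
      HasDerivAt.fun_sum fun i _ => (hdV i t x).pow 2
    have h1' : ((2:ℕ) * s (t,x) ^ (2-1) * ds t x) = 2 * s (t,x) * ds t x := by
      push_cast; ring
    have h2' : (∑ i, (2:ℕ) * (V (t,x) i) ^ (2-1) * dV i t x)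
        = ∑ i, 2 * V (t,x) i * dV i t x :=
      Finset.sum_congr rfl fun i _ => by push_cast; ring
    have h3 := h1.add h2
    rw [h1', h2'] at h3
    exact h3
  -- spatial regularity at fixed time
  have hst : ∀ t, ContDiff ℝ 1 (fun x => s (t, x)) := fun t =>
    hs.comp (contDiff_const.prodMk contDiff_id)
  have hVt : ∀ (i : Fin 3) (t), ContDiff ℝ 1 (fun x => V (t, x) i) := fun i t =>
    (hVi i).comp (contDiff_const.prodMk contDiff_id)
  -- product rule for pd3
  have hprod : ∀ t x i, pd3 i (fun y => s (t, y) * V (t, y) i) x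
      = s (t, x) * pd3 i (fun y => V (t, y) i) x
        + V (t, x) i * pd3 i (fun y => s (t, y)) x := by
    intro t x i
    unfold pd3
    rw [fderiv_fun_mul (((hst t).differentiable one_ne_zero) x)
      (((hVt i t).differentiable one_ne_zero) x)]
    simp
  -- pointwise identity : ε·F' = -2 · divergence of s·V
  have key : ∀ t x, ε * F' t x
      = -2 * ∑ i, pd3 i (fun y => s (t, y) * V (t, y) i) x := by
    intro t x
    have h0 := hm1 t x
    have h00 := hm2 t x 0
    have h01 := hm2 t x 1
    have h02 := hm2 t x 2
    rw [hF'def]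
    simp only [Fin.sum_univ_three, Matrix.cons_val_zero, Matrix.cons_val_one,
      Matrix.head_cons, Matrix.cons_val_two, Matrix.tail_cons] at h0 h00 h01 h02 ⊢
    rw [hprod t x 0, hprod t x 1, hprod t x 2]
    linear_combination 2 * s (t, x) * h0 + 2 * V (t, x) 0 * h00
      + 2 * V (t, x) 1 * h01 + 2 * V (t, x) 2 * h02
  -- continuity of the derivative density
  have hdscont : Continuous fun p : ℝ × (Fin 3 → ℝ) => fderiv ℝ s p (1, (0 : Fin 3 → ℝ)) :=
    (hs.continuous_fderiv one_ne_zero).clm_apply continuous_const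
  have hdVcont : ∀ i : Fin 3,
      Continuous fun p : ℝ × (Fin 3 → ℝ) =>
        fderiv ℝ (fun q => V q i) p (1, (0 : Fin 3 → ℝ)) := fun i =>
    ((hVi i).continuous_fderiv one_ne_zero).clm_apply continuous_const
  have hF'cont : Continuous fun p : ℝ × (Fin 3 → ℝ) => F' p.1 p.2 := by
    have heq : (fun p : ℝ × (Fin 3 → ℝ) => F' p.1 p.2)
        = fun p => 2 * s p * fderiv ℝ s p (1, (0 : Fin 3 → ℝ))
          + ∑ i, 2 * V p i * fderiv ℝ (fun q => V q i) p (1, (0 : Fin 3 → ℝ)) := rfl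
    rw [heq]
    exact ((continuous_const.mul hs.continuous).mul hdscont).add
      (continuous_finset_sum _ fun i _ =>
        (continuous_const.mul ((hVi i).continuous)).mul (hdVcont i))
  -- integrability of the energy density at each time
  have hFint : ∀ t, Integrable (fun x => F (t, x)) := fun t => by
    apply Continuous.integrable_of_hasCompactSupport
      (hFc.continuous.comp (continuous_const.prodMk continuous_id))
    exact HasCompactSupport.intro hK fun x hx => by
      simp [hFdef, hs0 t x hx, hV0 t x hx]
  -- the energy has zero derivative everywhere
  have hE : ∀ t₀ : ℝ, HasDerivAt (fun t => ∫ x, F (t, x)) 0 t₀ := by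
    intro t₀
    have hKc : IsCompact ((Icc (t₀ - 1) (t₀ + 1)) ×ˢ K) := isCompact_Icc.prod hK
    obtain ⟨C, hC⟩ := hKc.exists_bound_of_continuousOn hF'cont.continuousOn
    set bound : (Fin 3 → ℝ) → ℝ := K.indicator fun _ => C with hbdef
    have h_bound : ∀ x, ∀ t ∈ Metric.ball t₀ 1, ‖F' t x‖ ≤ bound x := by
      intro x t ht
      by_cases hx : x ∈ K
      · have habs := abs_lt.mp (by rwa [Metric.mem_ball, Real.dist_eq] at ht)
        have ht' : t ∈ Icc (t₀ - 1) (t₀ + 1) := ⟨by linarith [habs.1], by linarith [habs.2]⟩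
        have := hC (t, x) ⟨ht', hx⟩
        rwa [hbdef, Set.indicator_of_mem hx]
      · have h1 : F' t x = 0 := by
          rw [hF'def]
          simp [hs0 t x hx, hV0 t x hx]
        rw [h1, hbdef, Set.indicator_of_notMem hx]
        simp
    have hbint : Integrable bound := by
      rw [hbdef]
      exact (integrableOn_const hK.measure_lt_top.ne).integrable_indicator
        hK.measurableSet
    have hder := hasDerivAt_integral_of_dominated_loc_of_deriv_le (μ := volume)
      (x₀ := t₀) (F := fun t x => F (t, x)) (F' := fun t x => F' t x)
      (bound := bound) (Metric.ball_mem_nhds t₀ zero_lt_one)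
      (Filter.Eventually.of_forall fun t =>
        (hFc.continuous.comp (continuous_const.prodMk continuous_id)).aestronglyMeasurable)
      (hFint t₀)
      ((hF'cont.comp (continuous_const.prodMk continuous_id)).aestronglyMeasurable)
      (Filter.Eventually.of_forall fun x t ht => h_bound x t ht)
      hbint
      (Filter.Eventually.of_forall fun x t _ => hFderiv t x)
    have hzero : (∫ x, F' t₀ x) = 0 := by
      have hFx : ∀ x, F' t₀ x
          = (-2 / ε) * ∑ i, pd3 i (fun y => s (t₀, y) * V (t₀, y) i) x := by
        intro x
        have h := key t₀ x
        field_simp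
        linarith
      have hdiv := div_integral_zero (fun i y => s (t₀, y) * V (t₀, y) i)
        (fun i => (hst t₀).mul (hVt i t₀)) K hK
        (fun i y hy => by
          by_contra hyK
          exact hy (by simp [hs0 t₀ y hyK]))
      simp only [hFx]
      rw [MeasureTheory.integral_const_mul, hdiv, mul_zero]
    rw [hzero] at hder
    exact hder.2
  have hdiffE : Differentiable ℝ (fun t => ∫ x, F (t, x)) := fun t => (hE t).differentiableAt
  have hconst := is_const_of_deriv_eq_zero hdiffE (fun t => (hE t).deriv)
  intro t₁ t₂
  exact hconst t₁ t₂
end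

section
/- Let γ > 1 and let p : (0,∞) → ℝ be continuously differentiable with p′(ρ) > 0 for all ρ > 0 and lim_{ρ→∞} p′(ρ)/ρ^{γ−1} = p_∞ for some p_∞ > 0, and let H(ρ) = ρ ∫₁^ρ p(z)/z² dz. Then there exist constants c > 0 and R > 1 such that for every ρ ≥ R: H(ρ) − H′(1)(ρ − 1) − H(1) ≥ c ρ^γ. -/
open Filter

/-- The pressure potential `H(ρ) = ρ ∫₁^ρ p(z)/z² dz`. -/
noncomputable def Hpot (p : ℝ → ℝ) (ρ : ℝ) : ℝ :=
  ρ * ∫ z in (1 : ℝ)..ρ, p z / z ^ 2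

set_option maxHeartbeats 1000000 in
/-- `γ`-growth of the relative entropy integrand at infinity: if `p′ > 0` on `(0,∞)` and
`p′(ρ)/ρ^{γ−1} → p∞ > 0` as `ρ → ∞` with `γ > 1`, then there exist `c > 0` and `R > 1`
such that `H(ρ) − H′(1)(ρ − 1) − H(1) ≥ c ρ^γ` for every `ρ ≥ R`. -/
theorem relative_entropy_gamma_growth
    (γ : ℝ) (hγ : 1 < γ)
    (p : ℝ → ℝ) (hp : ContDiffOn ℝ 1 p (Set.Ioi 0))
    (hp' : ∀ ρ : ℝ, 0 < ρ → 0 < deriv p ρ)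
    (pinf : ℝ) (hpinf : 0 < pinf)
    (hlim : Tendsto (fun ρ : ℝ => deriv p ρ / ρ ^ (γ - 1)) atTop (nhds pinf)) :
    ∃ c : ℝ, 0 < c ∧ ∃ R : ℝ, 1 < R ∧ ∀ ρ : ℝ, R ≤ ρ →
      c * ρ ^ γ ≤ Hpot p ρ - deriv (Hpot p) 1 * (ρ - 1) - Hpot p 1 := by
  have hγ0 : 0 < γ := by linarith
  have hγ1 : 0 < γ - 1 := by linarith
  have hopen : IsOpen (Set.Ioi (0:ℝ)) := isOpen_Ioi
  have hpc : ContinuousOn p (Set.Ioi 0) := hp.continuousOn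
  have hdc : ContinuousOn (deriv p) (Set.Ioi 0) :=
    hp.continuousOn_deriv_of_isOpen hopen le_rfl
  have hderivAt : ∀ x ∈ Set.Ioi (0:ℝ), HasDerivAt p (deriv p x) x := fun x hx =>
    ((hp.differentiableOn one_ne_zero).differentiableAt (hopen.mem_nhds hx)).hasDerivAt
  set f : ℝ → ℝ := fun z => p z / z ^ 2 with hfdef
  have hfc : ContinuousOn f (Set.Ioi 0) := by
    apply hpc.div (continuous_pow 2).continuousOn
    intro x hx
    exact pow_ne_zero 2 (ne_of_gt hx)
  -- H(1) = 0
  have hH1 : Hpot p 1 = 0 := by simp [Hpot]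
  -- H'(1) = p 1
  have hG : HasDerivAt (fun ρ : ℝ => ∫ z in (1:ℝ)..ρ, f z) (f 1) 1 := by
    refine intervalIntegral.integral_hasDerivAt_right (by simp) ?_ ?_
    · exact hfc.stronglyMeasurableAtFilter hopen 1 (by norm_num)
    · exact hfc.continuousAt (hopen.mem_nhds (by norm_num))
  have hHd : deriv (Hpot p) 1 = p 1 := by
    have h := (hasDerivAt_id (1:ℝ)).mul hG
    have h2 : HasDerivAt (Hpot p) (p 1) 1 := by
      have h' : HasDerivAt (Hpot p) _ 1 := h
      simpa [hfdef] using h'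
    exact h2.deriv
  -- threshold M
  obtain ⟨M0, hM0⟩ := eventually_atTop.mp
    (hlim.eventually (eventually_ge_nhds (by linarith : pinf/2 < pinf)))
  set M : ℝ := max M0 2 with hMdef
  have hM2 : (2:ℝ) ≤ M := le_max_right _ _
  have hMpos : (0:ℝ) < M := by linarith
  have hd_lb : ∀ z, M ≤ z → pinf/2 * z ^ (γ-1) ≤ deriv p z := by
    intro z hz
    have hz0 : 0 < z := lt_of_lt_of_le hMpos hz
    have h := hM0 z (le_trans (le_max_left _ _) hz)
    have hzp : 0 < z ^ (γ-1) := Real.rpow_pos_of_pos hz0 _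
    calc pinf/2 * z^(γ-1) ≤ (deriv p z / z^(γ-1)) * z^(γ-1) :=
          mul_le_mul_of_nonneg_right h hzp.le
      _ = deriv p z := div_mul_cancel₀ _ (ne_of_gt hzp)
  set A : ℝ := pinf / (2*γ) with hAdef
  have hA : 0 < A := div_pos hpinf (by linarith)
  set B : ℝ := p M - A * M ^ γ with hBdef
  -- pointwise lower bound on p
  have hp_lb : ∀ z, M ≤ z → A * z ^ γ + B ≤ p z := by
    intro z hz
    have hz0 : 0 < z := lt_of_lt_of_le hMpos hz
    have hsub : Set.uIcc M z ⊆ Set.Ioi (0:ℝ) := by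
      rw [Set.uIcc_of_le hz]
      intro t ht
      exact lt_of_lt_of_le hMpos ht.1
    have hftc : ∫ t in M..z, deriv p t = p z - p M :=
      intervalIntegral.integral_eq_sub_of_hasDerivAt
        (fun x hx => hderivAt x (hsub hx)) ((hdc.mono hsub).intervalIntegrable)
    have hint1 : IntervalIntegrable (fun t => pinf/2 * t^(γ-1)) MeasureTheory.volume M z := by
      apply ContinuousOn.intervalIntegrable
      apply ContinuousOn.mul continuousOn_const
      apply ContinuousOn.rpow_const continuousOn_id
      intro t ht
      exact Or.inl (ne_of_gt (hsub ht))
    have hint2 : IntervalIntegrable (deriv p) MeasureTheory.volume M z :=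
      (hdc.mono hsub).intervalIntegrable
    have hmono := intervalIntegral.integral_mono_on hz hint1 hint2
      (fun t ht => hd_lb t ht.1)
    have hval : ∫ t in M..z, pinf/2 * t^(γ-1) = pinf/2 * ((z^γ - M^γ)/γ) := by
      rw [intervalIntegral.integral_const_mul,
        integral_rpow (Or.inl (by linarith : (-1:ℝ) < γ - 1))]
      have hγe : γ - 1 + 1 = γ := by ring
      rw [hγe]
    rw [hval, hftc] at hmono
    have heq : A * (z^γ - M^γ) = pinf/2 * ((z^γ - M^γ)/γ) := by
      rw [hAdef]; field_simp
    have : A * (z^γ - M^γ) ≤ p z - p M := heq ▸ hmono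
    rw [hBdef]; linarith
  -- pointwise lower bound on the integrand f
  have hf_lb : ∀ z, M ≤ z → A * z ^ (γ - 2) + B * z ^ (-2 : ℝ) ≤ f z := by
    intro z hz
    have hz0 : 0 < z := lt_of_lt_of_le hMpos hz
    have hz2 : (0:ℝ) < z ^ 2 := by positivity
    have hrw : (z:ℝ) ^ ((2:ℕ):ℝ) = z ^ (2:ℕ) := Real.rpow_natCast z 2
    have h1 : z ^ (γ - 2) = z ^ γ / z ^ 2 := by
      rw [show (γ - 2) = γ - ((2:ℕ):ℝ) by norm_num, Real.rpow_sub hz0, hrw]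
    have h2 : z ^ (-2:ℝ) = (z ^ 2)⁻¹ := by
      rw [show (-2:ℝ) = -((2:ℕ):ℝ) by norm_num, Real.rpow_neg hz0.le, hrw]
    have hple := hp_lb z hz
    have : (A * z ^ γ + B) / z ^ 2 ≤ p z / z ^ 2 :=
      div_le_div_of_nonneg_right hple hz2.le
    calc A * z ^ (γ - 2) + B * z ^ (-2:ℝ) = (A * z ^ γ + B) / z ^ 2 := by
          rw [h1, h2]; ring
      _ ≤ p z / z ^ 2 := this
      _ = f z := rfl
  -- constants
  set A' : ℝ := A / (γ - 1) with hA'def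
  have hA' : 0 < A' := div_pos hA hγ1
  set c₁ : ℝ := ∫ z in (1:ℝ)..M, f z with hc₁def
  set C : ℝ := c₁ - A' * M^(γ-1) + B * M⁻¹ - p 1 with hCdef
  set D : ℝ := p 1 - B with hDdef
  clear_value A' c₁ C D
  obtain ⟨R0, hR0⟩ := eventually_atTop.mp
    ((tendsto_rpow_atTop hγ1).eventually_ge_atTop ((|C| + |D|) / (A'/2)))
  refine ⟨A'/2, by positivity, max M R0,
    lt_of_lt_of_le (by linarith : (1:ℝ) < M) (le_max_left _ _), ?_⟩
  intro ρ hρ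
  have hMρ : M ≤ ρ := le_trans (le_max_left _ _) hρ
  have hρ0 : 0 < ρ := lt_of_lt_of_le hMpos hMρ
  have hρ1 : (1:ℝ) ≤ ρ := by linarith
  -- splitting of the integral
  have hsub1 : Set.uIcc (1:ℝ) M ⊆ Set.Ioi (0:ℝ) := by
    rw [Set.uIcc_of_le (by linarith)]
    intro t ht; exact lt_of_lt_of_le one_pos ht.1
  have hsub2 : Set.uIcc M ρ ⊆ Set.Ioi (0:ℝ) := by
    rw [Set.uIcc_of_le hMρ]
    intro t ht; exact lt_of_lt_of_le hMpos ht.1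
  have hint1M : IntervalIntegrable f MeasureTheory.volume 1 M :=
    (hfc.mono hsub1).intervalIntegrable
  have hintMρ : IntervalIntegrable f MeasureTheory.volume M ρ :=
    (hfc.mono hsub2).intervalIntegrable
  have hsplit : ∫ z in (1:ℝ)..ρ, f z = c₁ + ∫ z in M..ρ, f z :=
    by rw [hc₁def]
       exact (intervalIntegral.integral_add_adjacent_intervals hint1M hintMρ).symm
  -- lower bound for the tail integral
  have hg1int : IntervalIntegrable (fun z => A * z^(γ-2)) MeasureTheory.volume M ρ := by
    apply ContinuousOn.intervalIntegrable
    apply ContinuousOn.mul continuousOn_const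
    apply ContinuousOn.rpow_const continuousOn_id
    intro t ht; exact Or.inl (ne_of_gt (hsub2 ht))
  have hg2int : IntervalIntegrable (fun z => B * z^(-2:ℝ)) MeasureTheory.volume M ρ := by
    apply ContinuousOn.intervalIntegrable
    apply ContinuousOn.mul continuousOn_const
    apply ContinuousOn.rpow_const continuousOn_id
    intro t ht; exact Or.inl (ne_of_gt (hsub2 ht))
  have hgint : IntervalIntegrable (fun z => A * z^(γ-2) + B * z^(-2:ℝ))
      MeasureTheory.volume M ρ := hg1int.add hg2int
  have hnot0 : (0:ℝ) ∉ Set.uIcc M ρ := fun h => lt_irrefl 0 (Set.mem_Ioi.mp (hsub2 h))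
  have hI2 : A' * (ρ^(γ-1) - M^(γ-1)) + B * (M⁻¹ - ρ⁻¹) ≤ ∫ z in M..ρ, f z := by
    have hmono := intervalIntegral.integral_mono_on hMρ hgint hintMρ
      (fun t ht => hf_lb t ht.1)
    have hval : (∫ z in M..ρ, (A * z^(γ-2) + B * z^(-2:ℝ)))
        = A' * (ρ^(γ-1) - M^(γ-1)) + B * (M⁻¹ - ρ⁻¹) := by
      rw [intervalIntegral.integral_add hg1int hg2int,
        intervalIntegral.integral_const_mul, intervalIntegral.integral_const_mul,
        integral_rpow (Or.inl (by linarith : (-1:ℝ) < γ - 2)),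
        integral_rpow (Or.inr ⟨by norm_num, hnot0⟩)]
      have e1 : γ - 2 + 1 = γ - 1 := by ring
      have e2 : (-2:ℝ) + 1 = -1 := by norm_num
      rw [e1, e2, Real.rpow_neg_one, Real.rpow_neg_one, hA'def]
      field_simp
      ring
    rw [hval] at hmono
    exact hmono
  -- algebra
  have hrpow : ρ ^ γ = ρ * ρ ^ (γ - 1) := by
    rw [show γ = (1:ℝ) + (γ - 1) by ring, Real.rpow_add hρ0, Real.rpow_one]
    ring_nf
  have hXR : (|C| + |D|) / (A'/2) ≤ ρ^(γ-1) := hR0 ρ (le_trans (le_max_right _ _) hρ)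
  have hkey : |C| + |D| ≤ A'/2 * ρ^(γ-1) := by
    rw [div_le_iff₀ (by positivity : (0:ℝ) < A'/2)] at hXR
    linarith [hXR]
  have hkey2 : (|C| + |D|) * ρ ≤ A'/2 * (ρ * ρ^(γ-1)) := by
    have := mul_le_mul_of_nonneg_right hkey hρ0.le
    nlinarith [this]
  have hf1 : -|C| * ρ ≤ C * ρ :=
    mul_le_mul_of_nonneg_right (neg_abs_le C) hρ0.le
  have hf2 : |D| ≤ |D| * ρ := le_mul_of_one_le_right (abs_nonneg D) hρ1
  have hf3 : -|D| ≤ D := neg_abs_le D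
  have harith : A'/2 * ρ^γ ≤ A' * ρ^γ + C * ρ + D := by
    rw [hrpow]
    nlinarith [hkey2, hf1, hf2, hf3]
  -- final chain
  have hHρ : Hpot p ρ = ρ * (c₁ + ∫ z in M..ρ, f z) := by
    rw [show Hpot p ρ = ρ * ∫ z in (1:ℝ)..ρ, f z from rfl, hsplit]
  have hmul := mul_le_mul_of_nonneg_left hI2 hρ0.le
  have heq : ρ * c₁ + ρ * (A' * (ρ^(γ-1) - M^(γ-1)) + B * (M⁻¹ - ρ⁻¹)) - p 1 * (ρ - 1)
      = A' * ρ^γ + C * ρ + D := by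
    rw [hCdef, hDdef, hrpow]
    field_simp
    ring
  rw [hHd, hH1]
  calc A'/2 * ρ^γ ≤ A' * ρ^γ + C * ρ + D := harith
    _ = ρ * c₁ + ρ * (A' * (ρ^(γ-1) - M^(γ-1)) + B * (M⁻¹ - ρ⁻¹)) - p 1 * (ρ - 1) := heq.symm
    _ ≤ ρ * c₁ + ρ * (∫ z in M..ρ, f z) - p 1 * (ρ - 1) := by linarith [hmul]
    _ = Hpot p ρ - p 1 * (ρ - 1) - 0 := by rw [hHρ]; ring
end
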